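/- Suppose either n = 2k − 2 with k ≥ 2, or n = 2k − 3 with k ≥ 3. Then D_{1,1} = det M̃_{1,1} lies in the subspace 𝓘 ⊗_ℂ 𝓗 of 𝓘 ⊗_ℂ 𝒫, is nonzero, and satisfies ψ(D_{1,1}) = 0. Consequently, Ker φ^{(n,k)} ≠ 0 in these boundary non-stable cases. -/

import Mathlib

open MvPolynomial TensorProduct

set_option synthInstance.maxHeartbeats 1000000
set_option maxHeartbeats 1000000

noncomputable section

abbrev P (n k : ℕ) : Type := MvPolynomial (Fin k × Fin n) ℂ

/-- r_{ij} = Σ_m x_{im} x_{j,n+1-m} -/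
def rpoly (n k : ℕ) (i j : Fin k) : P n k :=
  ∑ m : Fin n, X (i, m) * X (j, m.rev)

/-- the subalgebra of invariants -/
def InvAlg (n k : ℕ) : Subalgebra ℂ (P n k) :=
  Algebra.adjoin ℂ (Set.range fun p : Fin k × Fin k => rpoly n k p.1 p.2)

/-- Laplace operators -/
def Δop (n k : ℕ) (i j : Fin k) : P n k →ₗ[ℂ] P n k :=
  ∑ m : Fin n, ((pderiv (i, m)).toLinearMap ∘ₗ (pderiv (j, m.rev)).toLinearMap)

/-- harmonic polynomials -/
def Harm (n k : ℕ) : Submodule ℂ (P n k) :=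
  ⨅ (i : Fin k) (j : Fin k), LinearMap.ker (Δop n k i j)

/-- multiplication map restricted to a subspace F of harmonics -/
def φF (n k : ℕ) (F : Submodule ℂ (P n k)) :
    (InvAlg n k) ⊗[ℂ] F →ₗ[ℂ] P n k :=
  TensorProduct.lift ((LinearMap.mul ℂ (P n k)).compl₁₂
    (InvAlg n k).val.toLinearMap F.subtype)

def φ (n k : ℕ) : (InvAlg n k) ⊗[ℂ] (Harm n k) →ₗ[ℂ] P n k := φF n k (Harm n k)

/-- r_{ij} as an element of the invariant subalgebra -/
def rInv (n k : ℕ) (i j : Fin k) : InvAlg n k :=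
  ⟨rpoly n k i j, Algebra.subset_adjoin ⟨(i, j), rfl⟩⟩

/-- the multiplication map ψ : 𝓘 ⊗ 𝒫 → 𝒫 (an algebra map) -/
def ψmul (n k : ℕ) : ((InvAlg n k) ⊗[ℂ] (P n k)) →ₐ[ℂ] P n k :=
  Algebra.TensorProduct.productMap (InvAlg n k).val (AlgHom.id ℂ (P n k))

/-- the canonical inclusion 𝓘 ⊗ 𝓗 → 𝓘 ⊗ 𝒫 -/
def incl (n k : ℕ) : (InvAlg n k) ⊗[ℂ] (Harm n k) →ₗ[ℂ] (InvAlg n k) ⊗[ℂ] (P n k) :=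
  LinearMap.lTensor (InvAlg n k) (Harm n k).subtype

/-- the matrix M̃^{(n,k)} over 𝓘 ⊗ 𝒫: entries of the top-left invariant block are
r_{ij} ⊗ 1, all other entries P of M^{(n,k)} become 1 ⊗ P. -/
def Mt (n k : ℕ) :
    Matrix (Fin (k + n)) (Fin (k + n)) ((InvAlg n k) ⊗[ℂ] (P n k)) :=
  (Matrix.fromBlocks
    (Matrix.of fun i j : Fin k => (rInv n k i j) ⊗ₜ[ℂ] (1 : P n k))
    (Matrix.of fun (i : Fin k) (b : Fin n) =>
      (1 : InvAlg n k) ⊗ₜ[ℂ] (X (i, b.rev) : P n k))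
    (Matrix.of fun (a : Fin n) (j : Fin k) =>
      (1 : InvAlg n k) ⊗ₜ[ℂ] (X (j, a.rev) : P n k))
    (Matrix.of fun a b : Fin n =>
      (1 : InvAlg n k) ⊗ₜ[ℂ] (if b = a.rev then (1 : P n k) else 0))).submatrix
      finSumFinEquiv.symm finSumFinEquiv.symm

/-- D_{a+1,b+1} = det M̃_{a+1,b+1}, the minor of M̃^{(n,k)} on the (n+1) consecutive
rows starting at row a and columns starting at column b (0-indexed offsets). -/
def Dmin (n k : ℕ) (a b : ℕ) (ha : a < k) (hb : b < k) : (InvAlg n k) ⊗[ℂ] (P n k) :=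
  ((Mt n k).submatrix
    (fun i : Fin (n + 1) => (⟨a + i.val, by have := i.isLt; omega⟩ : Fin (k + n)))
    (fun j : Fin (n + 1) => (⟨b + j.val, by have := j.isLt; omega⟩ : Fin (k + n)))).det


namespace Aux

variable (n k : ℕ)

/-- entry description of the (1,1)-minor matrix -/
def Eent (hk : 0 < k) (r c : Fin (n + 1)) : (InvAlg n k) ⊗[ℂ] (P n k) :=
  if hr : r.val < k then
    if hc : c.val < k then rInv n k ⟨r.val, hr⟩ ⟨c.val, hc⟩ ⊗ₜ[ℂ] 1
    else (1 : InvAlg n k) ⊗ₜ[ℂ]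
      (X (⟨r.val, hr⟩, Fin.rev ⟨c.val - k, by have := c.isLt; omega⟩) : P n k)
  else
    if hc : c.val < k then (1 : InvAlg n k) ⊗ₜ[ℂ]
      (X (⟨c.val, hc⟩, Fin.rev ⟨r.val - k, by have := r.isLt; omega⟩) : P n k)
    else (1 : InvAlg n k) ⊗ₜ[ℂ]
      (if (⟨c.val - k, by have := c.isLt; omega⟩ : Fin n)
          = Fin.rev ⟨r.val - k, by have := r.isLt; omega⟩ then (1 : P n k) else 0)

lemma finsym_lt {a b : ℕ} (x : Fin (a + b)) (h : x.val < a) :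
    finSumFinEquiv.symm x = Sum.inl ⟨x.val, h⟩ := by
  rw [Equiv.symm_apply_eq, finSumFinEquiv_apply_left]
  exact (Fin.ext (by simp)).symm

lemma finsym_ge {a b : ℕ} (x : Fin (a + b)) (h : ¬ x.val < a) :
    finSumFinEquiv.symm x = Sum.inr ⟨x.val - a, by have := x.isLt; omega⟩ := by
  rw [Equiv.symm_apply_eq, finSumFinEquiv_apply_right]
  refine (Fin.ext ?_).symm
  simp only [Fin.natAdd_mk, Fin.val_mk]
  omega

lemma Dmin_eq (hk : 0 < k) :
    Dmin n k 0 0 hk hk = (Matrix.of fun r c => Eent n k hk r c).det := by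
  unfold Dmin Mt
  congr 1
  funext r c
  simp only [Matrix.submatrix_apply, Matrix.of_apply, Eent]
  by_cases hr : r.val < k <;> by_cases hc : c.val < k <;>
    simp only [hr, hc, dif_pos, dif_neg, not_false_iff]
  · rw [finsym_lt _ (show (0 + r.val) < k by omega), finsym_lt _ (show (0 + c.val) < k by omega)]
    simp only [Matrix.fromBlocks_apply₁₁, Matrix.of_apply]
    simp only [Nat.zero_add]
  · rw [finsym_lt _ (show (0 + r.val) < k by omega),
      finsym_ge (⟨0 + c.val, _⟩ : Fin (k + n)) (by simpa using hc)]
    simp only [Matrix.fromBlocks_apply₁₂, Matrix.of_apply]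
    simp only [Nat.zero_add]
  · rw [finsym_ge (⟨0 + r.val, _⟩ : Fin (k + n)) (by simpa using hr),
      finsym_lt _ (show (0 + c.val) < k by omega)]
    simp only [Matrix.fromBlocks_apply₂₁, Matrix.of_apply]
    simp only [Nat.zero_add]
  · rw [finsym_ge (⟨0 + r.val, _⟩ : Fin (k + n)) (by simpa using hr),
      finsym_ge (⟨0 + c.val, _⟩ : Fin (k + n)) (by simpa using hc)]
    simp only [Matrix.fromBlocks_apply₂₂, Matrix.of_apply]
    simp only [Nat.zero_add]

/-! ### Part A : ψ(D) = 0 -/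

def Wl : Matrix (Fin (n + 1)) (Fin (n + 1)) (P n k) := fun r t =>
  if ht : t.val < n then
    (if hr : r.val < k then X (⟨r.val, hr⟩, ⟨t.val, ht⟩)
     else if r.val = k + t.val then 1 else 0)
  else 0

def Wr : Matrix (Fin (n + 1)) (Fin (n + 1)) (P n k) := fun t c =>
  if ht : t.val < n then
    (if hc : c.val < k then X (⟨c.val, hc⟩, Fin.rev ⟨t.val, ht⟩)
     else if c.val = k + (Fin.rev (⟨t.val, ht⟩ : Fin n)).val then 1 else 0)
  else 0

lemma psi_entry (hk : 0 < k) (r c : Fin (n+1)) :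
    ψmul n k (Eent n k hk r c) = ∑ t : Fin (n+1), Wl n k r t * Wr n k t c := by
  have hrlt := r.isLt
  have hclt := c.isLt
  rw [Fin.sum_univ_castSucc]
  have hlast : Wl n k r (Fin.last n) = 0 := by simp [Wl]
  rw [hlast, zero_mul, add_zero]
  have step : ∀ t : Fin n, Wl n k r t.castSucc * Wr n k t.castSucc c =
      (if hr : r.val < k then (X (⟨r.val, hr⟩, t) : P n k)
        else if r.val = k + t.val then 1 else 0) *
      (if hc : c.val < k then (X (⟨c.val, hc⟩, Fin.rev t) : P n k)
        else if c.val = k + (Fin.rev t).val then 1 else 0) := by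
    intro t
    simp only [Wl, Wr, Fin.coe_castSucc, t.isLt, dif_pos, Fin.eta]
  simp only [step]
  unfold Eent
  by_cases hr : r.val < k <;> by_cases hc : c.val < k <;>
    simp only [hr, hc, dif_pos, dif_neg, not_false_iff]
  · simp [ψmul, rInv, rpoly, Algebra.TensorProduct.productMap_apply_tmul]
  · rw [Finset.sum_eq_single (Fin.rev (⟨c.val - k, by omega⟩ : Fin n))]
    · rw [Fin.rev_rev]
      rw [if_pos (by omega : (c : ℕ) = k + ((c : ℕ) - k))]
      simp [ψmul, Algebra.TensorProduct.productMap_apply_tmul]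
    · intro b _ hb
      have hbne : ¬ ((c : ℕ) = k + (Fin.rev b).val) := by
        rw [Fin.val_rev]
        intro hcb
        apply hb
        apply Fin.ext
        simp only [Fin.val_rev, Fin.val_mk]
        have := b.isLt
        omega
      rw [if_neg hbne, mul_zero]
    · intro h; exact absurd (Finset.mem_univ _) h
  · rw [Finset.sum_eq_single (⟨r.val - k, by omega⟩ : Fin n)]
    · rw [if_pos (by omega : (r : ℕ) = k + ((r : ℕ) - k)), one_mul]
      simp [ψmul, Algebra.TensorProduct.productMap_apply_tmul]
    · intro b _ hb
      have hbne : ¬ ((r : ℕ) = k + b.val) := by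
        intro hrb
        apply hb
        apply Fin.ext
        simp only [Fin.val_mk]
        omega
      rw [if_neg hbne, zero_mul]
    · intro h; exact absurd (Finset.mem_univ _) h
  · rw [Finset.sum_eq_single (⟨r.val - k, by omega⟩ : Fin n)]
    · rw [if_pos (by omega : (r : ℕ) = k + ((r : ℕ) - k)), one_mul]
      split_ifs with hA hB hB
      · simp [ψmul, Algebra.TensorProduct.productMap_apply_tmul]
      · exfalso
        apply hB
        have := congrArg Fin.val hA
        simp only [Fin.val_rev, Fin.val_mk] at this ⊢
        omega
      · exfalso
        apply hA
        apply Fin.ext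
        simp only [Fin.val_rev, Fin.val_mk] at hB ⊢
        omega
      · simp [ψmul]
    · intro b _ hb
      have hbne : ¬ ((r : ℕ) = k + b.val) := by
        intro hrb
        apply hb
        apply Fin.ext
        simp only [Fin.val_mk]
        omega
      rw [if_neg hbne, zero_mul]
    · intro h; exact absurd (Finset.mem_univ _) h

lemma psi_D_zero (hk : 0 < k) : ψmul n k (Dmin n k 0 0 hk hk) = 0 := by
  rw [Dmin_eq]
  refine ((ψmul n k).map_det (Matrix.of fun r c => Eent n k hk r c)).trans ?_
  rw [AlgHom.mapMatrix_apply]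
  have hfac : (Matrix.of fun r c => Eent n k hk r c).map (ψmul n k) = Wl n k * Wr n k := by
    funext r c
    simp only [Matrix.map_apply, Matrix.of_apply, Matrix.mul_apply]
    exact psi_entry n k hk r c
  rw [hfac, Matrix.det_mul]
  have : (Wl n k).det = 0 := by
    apply Matrix.det_eq_zero_of_column_eq_zero (Fin.last n)
    intro i
    simp [Wl]
  rw [this, zero_mul]

/-! ### Part B : harmonicity -/

def gs : Set (Fin k × Fin n) := {v | k - 1 ≤ v.2.val}

lemma pderiv_supported (s : Set (Fin k × Fin n)) (v : Fin k × Fin n)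
    {p : P n k} (hp : p ∈ MvPolynomial.supported ℂ s) :
    (pderiv v) p ∈ MvPolynomial.supported ℂ s := by
  have hp' : p ∈ Algebra.adjoin ℂ (MvPolynomial.X '' s) := hp
  clear hp
  induction hp' using Algebra.adjoin_induction with
  | mem x hx =>
      obtain ⟨u, hu, rfl⟩ := hx
      classical
      rw [pderiv_X]
      by_cases h : v = u
      · subst h; rw [Pi.single_eq_same]; exact one_mem _
      · rw [Pi.single_eq_of_ne (Ne.symm h)]; exact zero_mem _
  | algebraMap r => rw [MvPolynomial.algebraMap_eq, pderiv_C]; exact zero_mem _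
  | add x y hx hy ihx ihy => rw [map_add]; exact add_mem ihx ihy
  | mul x y hx hy ihx ihy =>
      rw [pderiv_mul]
      exact add_mem (mul_mem ihx hy) (mul_mem hx ihy)

lemma supported_subset_harm (h2 : n + 2 ≤ 2 * k) {p : P n k}
    (hp : p ∈ MvPolynomial.supported ℂ (gs n k)) : p ∈ Harm n k := by
  rw [Harm, Submodule.mem_iInf]
  intro i
  rw [Submodule.mem_iInf]
  intro j
  rw [LinearMap.mem_ker, Δop, LinearMap.sum_apply]
  apply Finset.sum_eq_zero
  intro m _
  by_cases hm : k - 1 ≤ (Fin.rev m).val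
  · have h1 : (pderiv (j, Fin.rev m)) p ∈ MvPolynomial.supported ℂ (gs n k) :=
      pderiv_supported n k _ _ hp
    show (pderiv (i, m)) ((pderiv (j, Fin.rev m)) p) = 0
    apply MvPolynomial.pderiv_eq_zero_of_notMem_vars
    intro hmem
    have hmem' := (MvPolynomial.mem_supported.mp h1) hmem
    have hrev := Fin.val_rev m
    have hlt := m.isLt
    simp only [gs, Set.mem_setOf_eq] at hmem'
    omega
  · have h0 : (pderiv (j, Fin.rev m)) p = 0 := by
      apply MvPolynomial.pderiv_eq_zero_of_notMem_vars
      intro hmem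
      exact hm ((MvPolynomial.mem_supported.mp hp) hmem)
    show (pderiv (i, m)) ((pderiv (j, Fin.rev m)) p) = 0
    rw [h0, map_zero]

/-- the algebra map 𝓘 ⊗ supported → 𝓘 ⊗ 𝒫 -/
def Qmap : (InvAlg n k) ⊗[ℂ] (MvPolynomial.supported ℂ (gs n k)) →ₐ[ℂ]
    (InvAlg n k) ⊗[ℂ] (P n k) :=
  Algebra.TensorProduct.map (AlgHom.id ℂ (InvAlg n k)) (MvPolynomial.supported ℂ (gs n k)).val

lemma entry_mem_Q (hk : 0 < k) (h2 : n + 2 ≤ 2 * k) (r c : Fin (n+1)) :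
    Eent n k hk r c ∈ (Qmap n k).range := by
  have hrlt := r.isLt
  have hclt := c.isLt
  unfold Eent
  by_cases hr : r.val < k <;> by_cases hc : c.val < k <;>
    simp only [hr, hc, dif_pos, dif_neg, not_false_iff]
  · exact ⟨rInv n k ⟨r.val, hr⟩ ⟨c.val, hc⟩ ⊗ₜ[ℂ] 1,
      by simp [Qmap, Algebra.TensorProduct.map_tmul]⟩
  · refine ⟨(1 : InvAlg n k) ⊗ₜ[ℂ]
      ⟨X (⟨r.val, hr⟩, Fin.rev ⟨c.val - k, by omega⟩), ?_⟩, by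
        simp [Qmap, Algebra.TensorProduct.map_tmul]⟩
    rw [MvPolynomial.X_mem_supported]
    simp only [gs, Set.mem_setOf_eq, Fin.val_rev, Fin.val_mk]
    omega
  · refine ⟨(1 : InvAlg n k) ⊗ₜ[ℂ]
      ⟨X (⟨c.val, hc⟩, Fin.rev ⟨r.val - k, by omega⟩), ?_⟩, by
        simp [Qmap, Algebra.TensorProduct.map_tmul]⟩
    rw [MvPolynomial.X_mem_supported]
    simp only [gs, Set.mem_setOf_eq, Fin.val_rev, Fin.val_mk]
    omega
  · split_ifs with hA
    · exact ⟨(1 : InvAlg n k) ⊗ₜ[ℂ] 1, by simp [Qmap, Algebra.TensorProduct.map_tmul]⟩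
    · exact ⟨0, by simp [Qmap]⟩

lemma D_mem_Q (hk : 0 < k) (h2 : n + 2 ≤ 2 * k) :
    Dmin n k 0 0 hk hk ∈ (Qmap n k).range := by
  rw [Dmin_eq, Matrix.det_apply]
  apply Subalgebra.sum_mem
  intro σ _
  rw [Units.smul_def]
  convert Subalgebra.zsmul_mem _ (x := ∏ i, Matrix.of (fun r c => Eent n k hk r c) (σ i) i) ?_ _ using 1
  apply Subalgebra.prod_mem
  intro i _
  exact entry_mem_Q n k hk h2 _ _

lemma D_mem_incl (hk : 0 < k) (h2 : n + 2 ≤ 2 * k) :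
    ∃ w, incl n k w = Dmin n k 0 0 hk hk := by
  obtain ⟨y, hy⟩ := D_mem_Q n k hk h2
  suffices h : ∀ y, ∃ w, incl n k w = Qmap n k y by
    obtain ⟨w, hw⟩ := h y
    exact ⟨w, hw.trans hy⟩
  intro y
  induction y using TensorProduct.induction_on with
  | zero => exact ⟨0, by simp⟩
  | tmul a p =>
      exact ⟨a ⊗ₜ ⟨p.val, supported_subset_harm n k h2 p.2⟩, by
        simp [incl, Qmap, Algebra.TensorProduct.map_tmul]⟩
  | add x y hx hy =>
      obtain ⟨w1, h1⟩ := hx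
      obtain ⟨w2, h2'⟩ := hy
      exact ⟨w1 + w2, by rw [map_add, map_add, h1, h2']⟩

/-! ### Part C : nonvanishing -/

def pt1 (s : ℕ) : Fin k × Fin n → ℂ := fun v =>
  if v.1.val = k - s ∧ v.2.val = 0 then 1
  else if v.1.val = k - 1 ∧ v.2.val = n - 1 then (if s = 1 then (2 : ℂ)⁻¹ else 1) else 0

def pt2 : Fin k × Fin n → ℂ := fun v =>
  if v.1.val + v.2.val = n - 1 ∧ v.1.val + k ≤ n then 1 else 0

def gnat (r : ℕ) : ℕ := if r + k ≤ n then k + r else if r < k then n - r else r - k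

def gfin (r : Fin (n + 1)) : Fin (n + 1) :=
  ⟨gnat n k r.val, by have := r.isLt; unfold gnat; split_ifs <;> omega⟩

@[simp] lemma gfin_val (r : Fin (n + 1)) : (gfin n k r).val = gnat n k r.val := rfl

def χ (s : ℕ) : ((InvAlg n k) ⊗[ℂ] (P n k)) →ₐ[ℂ] ℂ :=
  Algebra.TensorProduct.productMap
    ((MvPolynomial.aeval (pt1 n k s)).comp (InvAlg n k).val)
    (MvPolynomial.aeval (pt2 n k))

set_option maxHeartbeats 4000000 in
lemma chi_entry (hk : 0 < k) (s : ℕ) (hs1 : 1 ≤ s) (hs2 : s ≤ 2)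
    (hsk : n + 1 + s = 2 * k) (hkn : k ≤ n) (hn2 : 2 ≤ n) (r c : Fin (n+1)) :
    χ n k s (Eent n k hk r c) = if c = gfin n k r then 1 else 0 := by
  have hrlt := r.isLt
  have hclt := c.isLt
  unfold Eent
  by_cases hr : r.val < k <;> by_cases hc : c.val < k <;>
    simp only [hr, hc, dif_pos, dif_neg, not_false_iff]
  · -- invariant block
    have expand : χ n k s (rInv n k ⟨r.val, hr⟩ ⟨c.val, hc⟩ ⊗ₜ[ℂ] 1)
        = ∑ t : Fin n, pt1 n k s (⟨r.val, hr⟩, t) * pt1 n k s (⟨c.val, hc⟩, Fin.rev t) := by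
      simp [χ, Algebra.TensorProduct.productMap_apply_tmul, rInv, rpoly, map_sum]
    rw [expand]
    rw [← Finset.sum_subset
      (Finset.subset_univ {(⟨0, by omega⟩ : Fin n), (⟨n-1, by omega⟩ : Fin n)})]
    · rw [Finset.sum_pair (by
        intro hcon
        have := congrArg Fin.val hcon
        simp only [Fin.val_mk] at this
        omega)]
      have hrev0 : Fin.rev (⟨0, by omega⟩ : Fin n) = ⟨n-1, by omega⟩ := by
        apply Fin.ext
        simp only [Fin.val_rev, Fin.val_mk]
      have hrev1 : Fin.rev (⟨n-1, by omega⟩ : Fin n) = ⟨0, by omega⟩ := by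
        apply Fin.ext
        simp only [Fin.val_rev, Fin.val_mk]
        omega
      rw [hrev0, hrev1]
      simp only [pt1, Fin.val_mk, Fin.ext_iff, gfin_val, gnat]
      rcases (show s = 1 ∨ s = 2 by omega) with rfl | rfl <;>
        · norm_num
          split_ifs <;> first | rfl | omega | (exfalso; omega) | norm_num
    · intro x _ hx
      simp only [Finset.mem_insert, Finset.mem_singleton] at hx
      push_neg at hx
      obtain ⟨hx0, hx1⟩ := hx
      have h1 : x.val ≠ 0 := by
        intro h; exact hx0 (Fin.ext (by simp only [Fin.val_mk]; exact h))
      have h2 : x.val ≠ n - 1 := by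
        intro h; exact hx1 (Fin.ext (by simp only [Fin.val_mk]; exact h))
      simp only [pt1]
      rw [if_neg (fun h => h1 h.2), if_neg (fun h => h2 h.2), zero_mul]
  · -- top right
    have expand : χ n k s ((1 : InvAlg n k) ⊗ₜ[ℂ]
        (X (⟨r.val, hr⟩, Fin.rev ⟨c.val - k, by omega⟩) : P n k))
        = pt2 n k (⟨r.val, hr⟩, Fin.rev ⟨c.val - k, by omega⟩) := by
      simp [χ, Algebra.TensorProduct.productMap_apply_tmul]
    rw [expand]
    simp only [pt2, Fin.val_rev, Fin.val_mk, Fin.ext_iff, gfin_val, gnat]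
    split_ifs <;> first | rfl | omega
  · -- bottom left
    have expand : χ n k s ((1 : InvAlg n k) ⊗ₜ[ℂ]
        (X (⟨c.val, hc⟩, Fin.rev ⟨r.val - k, by omega⟩) : P n k))
        = pt2 n k (⟨c.val, hc⟩, Fin.rev ⟨r.val - k, by omega⟩) := by
      simp [χ, Algebra.TensorProduct.productMap_apply_tmul]
    rw [expand]
    simp only [pt2, Fin.val_rev, Fin.val_mk, Fin.ext_iff, gfin_val, gnat]
    split_ifs <;> first | rfl | omega
  · -- bottom right
    have hA : ¬ ((⟨c.val - k, by omega⟩ : Fin n)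
        = Fin.rev ⟨r.val - k, by omega⟩) := by
      intro hA
      have := congrArg Fin.val hA
      simp only [Fin.val_rev, Fin.val_mk] at this
      omega
    rw [if_neg hA]
    have hB : ¬ (c = gfin n k r) := by
      rw [Fin.ext_iff, gfin_val]
      unfold gnat
      split_ifs <;> omega
    rw [if_neg hB, TensorProduct.tmul_zero]
    exact map_zero _

lemma g_inj (hkn : k ≤ n) (h2 : n + 2 ≤ 2 * k) :
    Function.Injective (gfin n k) := by
  intro r r' h
  have h' : gnat n k r.val = gnat n k r'.val := congrArg Fin.val h
  have hr := r.isLt; have hr' := r'.isLt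
  unfold gnat at h'
  exact Fin.ext (by split_ifs at h' <;> omega)

lemma D_ne_zero (hk : 0 < k) (s : ℕ) (hs1 : 1 ≤ s) (hs2 : s ≤ 2)
    (hsk : n + 1 + s = 2 * k) (hkn : k ≤ n) (hn2 : 2 ≤ n) :
    Dmin n k 0 0 hk hk ≠ 0 := by
  set N : Matrix (Fin (n+1)) (Fin (n+1)) ℂ :=
    Matrix.of fun r c => (if c = gfin n k r then (1 : ℂ) else 0) with hN
  have hmap : (Matrix.of fun r c => Eent n k hk r c).map (χ n k s) = N := by
    funext r c
    simp only [Matrix.map_apply, Matrix.of_apply, hN]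
    exact chi_entry n k hk s hs1 hs2 hsk hkn hn2 r c
  have hdet : χ n k s (Dmin n k 0 0 hk hk) = N.det := by
    rw [Dmin_eq]
    refine ((χ n k s).map_det (Matrix.of fun r c => Eent n k hk r c)).trans ?_
    rw [AlgHom.mapMatrix_apply, hmap]
  have hNNt : N * N.transpose = 1 := by
    ext r r'
    rw [Matrix.mul_apply]
    simp only [Matrix.transpose_apply, hN, Matrix.of_apply]
    have key : ∀ j : Fin (n+1), (if j = gfin n k r then (1:ℂ) else 0) *
        (if j = gfin n k r' then (1:ℂ) else 0)
        = if j = gfin n k r then (if j = gfin n k r' then (1:ℂ) else 0) else 0 := by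
      intro j; split_ifs <;> simp
    simp only [key]
    rw [Finset.sum_ite_eq' Finset.univ (gfin n k r)
      (fun j => if j = gfin n k r' then (1:ℂ) else 0)]
    rw [if_pos (Finset.mem_univ _), Matrix.one_apply]
    apply if_congr _ rfl rfl
    exact ⟨fun hgg => (g_inj n k hkn (by omega) hgg.symm).symm, fun h => by rw [h]⟩
  have hdet1 : N.det * N.det = 1 := by
    have hcongr := congrArg Matrix.det hNNt
    rwa [Matrix.det_mul, Matrix.det_transpose, Matrix.det_one] at hcongr
  intro h0
  rw [h0, map_zero] at hdet
  rw [← hdet] at hdet1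
  simp at hdet1

/-! ### glue -/

lemma phi_eq_psi_incl (x : (InvAlg n k) ⊗[ℂ] (Harm n k)) :
    φ n k x = ψmul n k (incl n k x) := by
  induction x using TensorProduct.induction_on with
  | zero => simp
  | tmul a h =>
      simp [φ, φF, incl, ψmul, TensorProduct.lift.tmul,
        Algebra.TensorProduct.productMap_apply_tmul]
  | add x y hx hy => simp [map_add, hx, hy]

end Aux

/-- in the boundary non-stable cases n = 2k-2 (k ≥ 2) and n = 2k-3 (k ≥ 3),
D_{1,1} = det M̃_{1,1} lies in 𝓘 ⊗ 𝓗, is nonzero and satisfies ψ(D_{1,1}) = 0;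
consequently Ker φ^{(n,k)} ≠ 0. -/
theorem boundary_nonstable_kernel_nonzero (n k : ℕ)
    (hcase : (n + 2 = 2 * k ∧ 2 ≤ k) ∨ (n + 3 = 2 * k ∧ 3 ≤ k))
    (hk : 0 < k) :
    Dmin n k 0 0 hk hk ≠ 0 ∧
    ψmul n k (Dmin n k 0 0 hk hk) = 0 ∧
    (∃ w : (InvAlg n k) ⊗[ℂ] (Harm n k),
      incl n k w = Dmin n k 0 0 hk hk ∧ w ≠ 0 ∧ φ n k w = 0) ∧
    LinearMap.ker (φ n k) ≠ ⊥ := by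
  
  have h2 : n + 2 ≤ 2 * k := by rcases hcase with ⟨h, _⟩ | ⟨h, _⟩ <;> omega
  have hkn : k ≤ n := by rcases hcase with ⟨h, h'⟩ | ⟨h, h'⟩ <;> omega
  have hn2 : 2 ≤ n := by rcases hcase with ⟨h, h'⟩ | ⟨h, h'⟩ <;> omega
  have hne : Dmin n k 0 0 hk hk ≠ 0 := by
    rcases hcase with ⟨h, h'⟩ | ⟨h, h'⟩
    · exact Aux.D_ne_zero n k hk 1 le_rfl (by omega) (by omega) hkn hn2
    · exact Aux.D_ne_zero n k hk 2 (by omega) le_rfl (by omega) hkn hn2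
  have hpsi := Aux.psi_D_zero n k hk
  obtain ⟨w, hw⟩ := Aux.D_mem_incl n k hk h2
  have hwne : w ≠ 0 := fun h => hne (by rw [← hw, h, map_zero])
  have hphiw : φ n k w = 0 := by rw [Aux.phi_eq_psi_incl, hw, hpsi]
  refine ⟨hne, hpsi, ⟨w, hw, hwne, hphiw⟩, ?_⟩
  intro hbot
  have hwk : w ∈ LinearMap.ker (φ n k) := LinearMap.mem_ker.mpr hphiw
  rw [hbot, Submodule.mem_bot] at hwk
  exact hwne hwk
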